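/- Let K be a field and n ≥ 2. Let μ : K → K satisfy μ(ab) = aμ(b) + μ(a)b for all a, b ∈ K, μ(1) = 0, and suppose μ arises as above from a map δ' with δ'(a e_{ij}) = μ(a)e_{ij} and δ'((a+b)e_{11}) = δ'((e_{11}+e_{12})(ae_{11}+be_{21})) computed via the derivation rule on matrices of rank ≤ 2 ≤ n. Then μ(a+b) = μ(a) + μ(b) for all a, b ∈ K, i.e., the identity δ'((e_{11}+e_{12})(ae_{11}+be_{21})) = (e_{11}+e_{12})(μ(a)e_{11}+μ(b)e_{21}) forces additivity of μ. -/

import Mathlib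

open Matrix

lemma rank_stdBasisMatrix_le_one {n : ℕ} (K : Type*) [Field K] (i j : Fin n) :
    (Matrix.single i j (1 : K)).rank ≤ 1 := by
  classical
  have h : LinearMap.range (Matrix.mulVecLin (Matrix.single i j (1 : K))) ≤
      K ∙ (Pi.single i 1 : Fin n → K) := by
    rintro _ ⟨v, rfl⟩
    rw [Matrix.mulVecLin_apply, single_mulVec]
    refine Submodule.mem_span_singleton.2 ⟨v j, ?_⟩
    ext k
    simp [Function.update_apply, Pi.single_apply, eq_comm]
  calc (Matrix.single i j (1 : K)).rank
      ≤ Module.finrank K (K ∙ (Pi.single i 1 : Fin n → K)) := Submodule.finrank_mono h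
    _ ≤ 1 := by
        have h0 : (Pi.single i 1 : Fin n → K) ≠ 0 := by
          intro h; simpa using congrFun h i
        exact le_of_eq (finrank_span_singleton h0)

theorem stmt_19 {n s : ℕ} (K : Type*) [Field K]
    (hn : 4 ≤ n) (hs1 : 2 ≤ s) (hs2 : 2 * s ≤ n)
    (δ' : Matrix (Fin n) (Fin n) K → Matrix (Fin n) (Fin n) K)
    (hδ : ∀ x y : Matrix (Fin n) (Fin n) K,
      x.rank ≤ s → y.rank ≤ s → min x.rank y.rank ≤ 1 →
      δ' (x * y) = δ' x * y + x * δ' y)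
    (hunits : ∀ i j : Fin n, δ' (Matrix.single i j (1 : K)) = 0)
    (μ : K → K)
    (hμδ : ∀ (a : K) (i j : Fin n),
      δ' (a • Matrix.single i j (1 : K)) = μ a • Matrix.single i j (1 : K))
    (hmul : ∀ a b : K, μ (a * b) = a * μ b + μ a * b)
    (hone : μ 1 = 0) :
    ∀ a b : K, μ (a + b) = μ a + μ b := by
  intro a b
  classical
  have hn2 : 2 ≤ n := by omega
  set i0 : Fin n := ⟨0, by omega⟩ with hi0
  set i1 : Fin n := ⟨1, by omega⟩ with hi1
  have h01 : i0 ≠ i1 := by simp [hi0, hi1, Fin.ext_iff]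
  have h10 : i1 ≠ i0 := h01.symm
  set E : Fin n → Fin n → Matrix (Fin n) (Fin n) K :=
    fun i j => Matrix.single i j (1 : K) with hE
  have hrankE : ∀ i j, (E i j).rank ≤ 1 := fun i j => rank_stdBasisMatrix_le_one K i j
  have hone_le_s : (1 : ℕ) ≤ s := by omega
  set u : Matrix (Fin n) (Fin n) K := E i0 i0 + E i0 i1 with hu
  set v : Matrix (Fin n) (Fin n) K := a • E i0 i0 + b • E i1 i0 with hv
  -- basic multiplication facts
  have hEmul : ∀ (i j k l : Fin n), E i j * E k l = if j = k then E i l else 0 := by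
    intro i j k l
    by_cases h : j = k
    · subst h; simp [hE, single_mul_single_same]
    · rw [if_neg h]; simp only [hE]; exact Matrix.single_mul_single_of_ne (c := (1 : K)) i j k h 1
  -- u = E i0 i0 * u, so rank u ≤ 1
  have huf : E i0 i0 * u = u := by
    rw [hu, mul_add, hEmul, hEmul]; simp
  have hranku : u.rank ≤ 1 := by
    calc u.rank = (E i0 i0 * u).rank := by rw [huf]
    _ ≤ (E i0 i0).rank := rank_mul_le_left _ _
    _ ≤ 1 := hrankE _ _
  -- v = v * E i0 i0, so rank v ≤ 1
  have hvf : v * E i0 i0 = v := by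
    rw [hv, add_mul, smul_mul_assoc, smul_mul_assoc, hEmul, hEmul]; simp
  have hrankv : v.rank ≤ 1 := by
    calc v.rank = (v * E i0 i0).rank := by rw [hvf]
    _ ≤ (E i0 i0).rank := rank_mul_le_right _ _
    _ ≤ 1 := hrankE _ _
  -- the general derivation application
  have happ : ∀ x y : Matrix (Fin n) (Fin n) K, x.rank ≤ 1 → y.rank ≤ 1 →
      δ' (x * y) = δ' x * y + x * δ' y := by
    intro x y hx hy
    exact hδ x y (hx.trans hone_le_s) (hy.trans hone_le_s)
      ((min_le_left _ _).trans hx)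
  -- δ'(u) * E i0 i0 = 0
  have h1 : δ' u * E i0 i0 = 0 := by
    have hm : u * E i0 i0 = E i0 i0 := by
      rw [hu, add_mul, hEmul, hEmul]; simp [h01, h10]
    have := happ u (E i0 i0) hranku (hrankE _ _)
    rw [hm] at this
    simp only [hE, hunits] at this
    simpa using this.symm
  -- δ'(u) * E i1 i0 = 0
  have h2 : δ' u * E i1 i0 = 0 := by
    have hm : u * E i1 i0 = E i0 i0 := by
      rw [hu, add_mul, hEmul, hEmul]; simp [h01, h10]
    have := happ u (E i1 i0) hranku (hrankE _ _)
    rw [hm] at this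
    simp only [hE, hunits] at this
    simpa using this.symm
  -- E i0 i0 * δ'(v) = μ a • E i0 i0
  have h3 : E i0 i0 * δ' v = μ a • E i0 i0 := by
    have hm : E i0 i0 * v = a • E i0 i0 := by
      rw [hv, mul_add, mul_smul_comm, mul_smul_comm, hEmul, hEmul]
      simp [h01, h10]
    have := happ (E i0 i0) v (hrankE _ _) hrankv
    rw [hm] at this
    simp only [hE, hunits, hμδ, zero_mul, zero_add] at this
    simp only [hE]
    exact this.symm
  -- E i0 i1 * δ'(v) = μ b • E i0 i0
  have h4 : E i0 i1 * δ' v = μ b • E i0 i0 := by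
    have hm : E i0 i1 * v = b • E i0 i0 := by
      rw [hv, mul_add, mul_smul_comm, mul_smul_comm, hEmul, hEmul]
      simp [h01, h10]
    have := happ (E i0 i1) v (hrankE _ _) hrankv
    rw [hm] at this
    simp only [hE, hunits, hμδ, zero_mul, zero_add] at this
    simp only [hE]
    exact this.symm
  -- main identity: u * v = (a+b) • E i0 i0
  have huv : u * v = (a + b) • E i0 i0 := by
    rw [hu, hv, add_mul, mul_add, mul_add, mul_smul_comm, mul_smul_comm,
      mul_smul_comm, mul_smul_comm, hEmul, hEmul, hEmul, hEmul]
    simp [h01, h10, add_smul]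
  have hmain := happ u v hranku hrankv
  rw [huv] at hmain
  simp only [hE, hμδ] at hmain
  -- rewrite the right hand side
  have hrhs : δ' u * v + u * δ' v = (μ a + μ b) • E i0 i0 := by
    rw [hv, hu, mul_add, add_mul, mul_smul_comm, mul_smul_comm, h1, h2, h3, h4]
    simp [add_smul]
  rw [hrhs] at hmain
  -- compare entries at (i0, i0)
  have := congrFun (congrFun hmain i0) i0
  simpa [hE, single_apply_same] using this
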